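/- arXiv:math/0503159 — 4 statements merged into one kernel-verified Lean document; each statement's English description precedes it below -/
import Mathlib

section
/- There exists a unique function C : ℂ → ℂ such that Φ₋₁(X, λ) = C(λ) Φ₀(X, λ) + Φ₁(X, λ) for all X, λ ∈ ℂ; this function C is entire, and it satisfies the relation C(λ) f₀(λ) = ω^{m/4} f₀(ω^{−2} λ) − ω^{−m/4} f₀(ω² λ) for every λ ∈ ℂ, where f₀(λ) := Φ₀(0, λ). -/
open Complex Filter Real

noncomputable section

/-- The point `r e^{iθ}` in the complex plane. -/
def rayPt (r θ : ℝ) : ℂ := (r : ℂ) * Complex.exp (θ * Complex.I)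

/-- The branch `X^s := exp(s(log r + iθ))` for `X = r e^{iθ}`. -/
def rayPow (r θ : ℝ) (s : ℂ) : ℂ := Complex.exp (s * ((Real.log r : ℂ) + θ * Complex.I))

/-- `ω := exp(2πi/(m+2))`. -/
def om (m : ℕ) : ℂ := Complex.exp (2 * Real.pi * Complex.I / (m + 2))

/-- `ω^s := exp((2πi/(m+2)) s)`. -/
def omPow (m : ℕ) (s : ℂ) : ℂ := Complex.exp ((2 * Real.pi * Complex.I / (m + 2)) * s)

/-- Sibuya's asymptotic characterization for the equation `-Φ'' + (X^m + λ)Φ = 0`: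
`Φ(re^{iθ}) (re^{iθ})^{m/4} exp((2/(m+2))(re^{iθ})^{(m+2)/2}) → 1` as `r → +∞`,
for every `|θ| < 3π/(m+2)`. -/
def SibAsympSp (m : ℕ) (Φ : ℂ → ℂ) : Prop :=
  ∀ θ : ℝ, |θ| < 3 * Real.pi / (m + 2) →
    Filter.Tendsto
      (fun r : ℝ => Φ (rayPt r θ) * rayPow r θ ((m : ℂ) / 4) *
        Complex.exp ((2 / ((m : ℂ) + 2)) * rayPow r θ (((m : ℂ) + 2) / 2)))
      Filter.atTop (nhds 1)

open Set

namespace Stmt3Aux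

/-- Entire function has entire derivative. -/
lemma deriv_entire {ψ : ℂ → ℂ} (h : Differentiable ℂ ψ) : Differentiable ℂ (deriv ψ) := by
  have h1 : AnalyticOnNhd ℂ ψ Set.univ := analyticOnNhd_univ_iff_differentiable.2 h
  have := h1.deriv
  exact differentiableOn_univ.mp this.differentiableOn

def IsSol (m : ℕ) (lam : ℂ) (ψ : ℂ → ℂ) : Prop :=
  Differentiable ℂ ψ ∧ ∀ X : ℂ, deriv (deriv ψ) X = (X ^ m + lam) * ψ X

lemma ode_unique {m : ℕ} {lam : ℂ} {ψ : ℂ → ℂ} (h : IsSol m lam ψ)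
    (h0 : ψ 0 = 0) (h1 : deriv ψ 0 = 0) : ∀ X, ψ X = 0 := by
  obtain ⟨hψ, hode⟩ := h
  have hψ' : Differentiable ℂ (deriv ψ) := deriv_entire hψ
  have hψ'' : Differentiable ℂ (deriv (deriv ψ)) := deriv_entire hψ'
  intro w
  -- clamp function
  set proj : ℝ → ℝ := fun t => max 0 (min t 1) with hproj
  have hprojmem : ∀ t, proj t ∈ Icc (0:ℝ) 1 := by
    intro t
    constructor
    · exact le_max_left _ _
    · simp only [hproj, max_le_iff]
      exact ⟨zero_le_one, min_le_right t 1⟩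
  have hprojid : ∀ t ∈ Ico (0:ℝ) 1, proj t = t := by
    intro t ht
    simp only [hproj]
    rw [min_eq_left ht.2.le, max_eq_right ht.1]
  set c : ℝ → ℂ := fun t => w ^ 2 * (((proj t : ℝ) * w) ^ m + lam) with hc
  -- bound on c
  obtain ⟨Q, hQ⟩ : ∃ Q : ℝ, ∀ s ∈ Icc (0:ℝ) 1, ‖w ^ 2 * (((s:ℝ) * w) ^ m + lam)‖ ≤ Q := by
    have hcont : ContinuousOn (fun s : ℝ => ‖w ^ 2 * (((s:ℝ) * w) ^ m + lam)‖) (Icc 0 1) := by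
      fun_prop
    obtain ⟨Q, hQ⟩ := (isCompact_Icc (a := (0:ℝ)) (b := 1)).exists_bound_of_continuousOn hcont
    exact ⟨Q, fun s hs => by simpa using hQ s hs⟩
  have hcQ : ∀ t, ‖c t‖ ≤ Q := fun t => hQ _ (hprojmem t)
  set K : NNReal := (max 1 Q).toNNReal with hK
  have hKval : (K : ℝ) = max 1 Q := Real.coe_toNNReal _ (le_trans zero_le_one (le_max_left 1 Q))
  set v : ℝ → ℂ × ℂ → ℂ × ℂ := fun t p => (p.2, c t * p.1) with hv
  have hlip : ∀ t, LipschitzOnWith K (v t) Set.univ := by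
    intro t
    apply LipschitzOnWith.of_dist_le_mul
    intro x _ y _
    rw [Prod.dist_eq, Prod.dist_eq]
    simp only [hv]
    simp only [dist_eq_norm]
    have h2 : ‖c t * x.1 - c t * y.1‖ = ‖c t‖ * ‖x.1 - y.1‖ := by
      rw [← mul_sub, norm_mul]
    rw [h2, hKval]
    have hcQ' := hcQ t
    have hn : (0:ℝ) ≤ ‖x.1 - y.1‖ := norm_nonneg _
    apply max_le
    · calc ‖x.2 - y.2‖ ≤ max ‖x.1 - y.1‖ ‖x.2 - y.2‖ := le_max_right _ _
        _ ≤ max 1 Q * max ‖x.1 - y.1‖ ‖x.2 - y.2‖ := by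
            nlinarith [le_max_left (1:ℝ) Q, le_max_left ‖x.1 - y.1‖ ‖x.2-y.2‖,
              norm_nonneg (x.2 - y.2), le_max_right ‖x.1 - y.1‖ ‖x.2-y.2‖]
    · calc ‖c t‖ * ‖x.1 - y.1‖ ≤ Q * ‖x.1 - y.1‖ := by
            have := norm_nonneg (c t); nlinarith
        _ ≤ max 1 Q * max ‖x.1 - y.1‖ ‖x.2 - y.2‖ := by
            have h3 : (0:ℝ) ≤ Q := le_trans (norm_nonneg _) hcQ'
            have := le_max_right (1:ℝ) Q
            have := le_max_left ‖x.1 - y.1‖ ‖x.2 - y.2‖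
            nlinarith
  set f : ℝ → ℂ × ℂ := fun t => (ψ ((t:ℂ) * w), w * deriv ψ ((t:ℂ) * w)) with hf
  -- derivative facts
  have hd1 : ∀ (g : ℂ → ℂ), Differentiable ℂ g → ∀ t : ℝ,
      HasDerivAt (fun s : ℝ => g ((s:ℂ) * w)) (deriv g ((t:ℂ) * w) * w) t := by
    intro g hg t
    have hinner : HasDerivAt (fun z : ℂ => z * w) w (t:ℂ) := hasDerivAt_mul_const w
    have houter : HasDerivAt g (deriv g ((t:ℂ) * w)) ((t:ℂ) * w) := (hg _).hasDerivAt
    have := HasDerivAt.comp (t:ℂ) houter hinner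
    exact this.comp_ofReal
  have hfderiv : ∀ t ∈ Ico (0:ℝ) 1, HasDerivWithinAt f (v t (f t)) (Ici t) t := by
    intro t ht
    have h1 : HasDerivAt (fun s : ℝ => ψ ((s:ℂ) * w)) (deriv ψ ((t:ℂ) * w) * w) t := hd1 ψ hψ t
    have h2 : HasDerivAt (fun s : ℝ => w * deriv ψ ((s:ℂ) * w))
        (w * (deriv (deriv ψ) ((t:ℂ) * w) * w)) t := (hd1 (deriv ψ) hψ' t).const_mul w
    have h3 : HasDerivAt f (deriv ψ ((t:ℂ) * w) * w, w * (deriv (deriv ψ) ((t:ℂ) * w) * w)) t :=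
      h1.prodMk h2
    have heq : (deriv ψ ((t:ℂ) * w) * w, w * (deriv (deriv ψ) ((t:ℂ) * w) * w)) = v t (f t) := by
      simp only [hv, hf, hc]
      rw [hprojid t ht, hode ((t:ℂ) * w)]
      simp only [Prod.mk.injEq]
      exact ⟨by ring, by ring⟩
    rw [← heq]
    exact h3.hasDerivWithinAt
  have hfc : ContinuousOn f (Icc (0:ℝ) 1) := by
    apply Continuous.continuousOn
    apply Continuous.prodMk
    · exact hψ.continuous.comp (by fun_prop)
    · exact continuous_const.mul (hψ'.continuous.comp (by fun_prop))
  have hgderiv : ∀ t ∈ Ico (0:ℝ) 1,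
      HasDerivWithinAt (fun _ : ℝ => ((0:ℂ), (0:ℂ))) (v t ((0:ℂ),(0:ℂ))) (Ici t) t := by
    intro t _
    have : v t ((0:ℂ),(0:ℂ)) = ((0:ℂ),(0:ℂ)) := by simp [hv]
    rw [this]
    exact (hasDerivAt_const t _).hasDerivWithinAt
  have ha : f 0 = ((0:ℂ),(0:ℂ)) := by
    simp only [hf, Complex.ofReal_zero, zero_mul, h0, h1, mul_zero]
  have := ODE_solution_unique_of_mem_Icc_right (v := v) (s := fun _ => Set.univ) (fun t _ => hlip t)
    hfc hfderiv (fun t _ => trivial)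
    (continuousOn_const) hgderiv (fun t _ => trivial) ha
  have h1' := this (right_mem_Icc.2 zero_le_one)
  simp only [hf, Complex.ofReal_one, one_mul, Prod.mk.injEq] at h1'
  exact h1'.1

end Stmt3Aux

namespace Stmt3Aux2
open Stmt3Aux

lemma deriv_comb {f g h : ℂ → ℂ} (hf : Differentiable ℂ f) (hg : Differentiable ℂ g)
    (hh : Differentiable ℂ h) (a b : ℂ) :
    deriv (fun X => f X - a * g X - b * h X)
      = fun X => deriv f X - a * deriv g X - b * deriv h X := by
  funext X
  have H : HasDerivAt (fun X => f X - a * g X - b * h X)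
      (deriv f X - a * deriv g X - b * deriv h X) X :=
    (((hf X).hasDerivAt.sub ((hg X).hasDerivAt.const_mul a)).sub
      ((hh X).hasDerivAt.const_mul b))
  exact H.deriv

lemma IsSol.comb {m : ℕ} {lam : ℂ} {f g h : ℂ → ℂ} (hf : IsSol m lam f) (hg : IsSol m lam g)
    (hh : IsSol m lam h) (a b : ℂ) : IsSol m lam (fun X => f X - a * g X - b * h X) := by
  obtain ⟨hfd, hfe⟩ := hf; obtain ⟨hgd, hge⟩ := hg; obtain ⟨hhd, hhe⟩ := hh
  constructor
  · exact (hfd.sub (hgd.const_mul a)).sub (hhd.const_mul b)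
  · intro X
    rw [deriv_comb hfd hgd hhd]
    rw [deriv_comb (deriv_entire hfd) (deriv_entire hgd) (deriv_entire hhd)]
    simp only [hfe, hge, hhe]
    ring

/-- zero function is a solution -/
lemma isSol_zero (m : ℕ) (lam : ℂ) : IsSol m lam (fun _ => (0:ℂ)) := by
  refine ⟨differentiable_const 0, fun X => ?_⟩
  simp [deriv_const']

/-- two solutions with the same initial data agree -/
lemma sol_eq {m : ℕ} {lam : ℂ} {f g : ℂ → ℂ} (hf : IsSol m lam f) (hg : IsSol m lam g)
    (a b : ℂ) (h0 : f 0 = a * g 0) (h1 : deriv f 0 = a * deriv g 0) :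
    ∀ X, f X = a * g X := by
  have hcomb := IsSol.comb hf hg (isSol_zero m lam) a 0
  have hder := deriv_comb hf.1 hg.1 (differentiable_const 0) a 0
  have := ode_unique hcomb ?_ ?_
  · intro X
    have h2 := this X
    linear_combination h2
  · simp only [mul_zero, sub_zero, h0]; ring
  · rw [hder]; simp only [mul_zero, sub_zero, h1]; ring

lemma deriv_scale {ψ : ℂ → ℂ} (hψ : Differentiable ℂ ψ) (c a : ℂ) :
    deriv (fun X => c * ψ (a * X)) = fun X => c * a * deriv ψ (a * X) := by
  funext X
  have hinner : HasDerivAt (fun X : ℂ => a * X) a X := by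
    simpa using (hasDerivAt_id X).const_mul a
  have houter : HasDerivAt ψ (deriv ψ (a * X)) (a * X) := (hψ _).hasDerivAt
  have H := ((houter.comp X hinner).const_mul c)
  have : c * (deriv ψ (a * X) * a) = c * a * deriv ψ (a * X) := by ring
  rw [this] at H
  exact H.deriv

lemma isSol_rotate {m : ℕ} {μ : ℂ} {ψ : ℂ → ℂ} (h : IsSol m μ ψ) (c a lam : ℂ)
    (ha : a ^ (m + 2) = 1) (hlam : a ^ 2 * μ = lam) :
    IsSol m lam (fun X => c * ψ (a * X)) := by
  obtain ⟨hd, he⟩ := h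
  have hcomp : Differentiable ℂ (fun X : ℂ => ψ (a * X)) :=
    hd.comp ((differentiable_id.const_mul a : Differentiable ℂ (fun X : ℂ => a * X)))
  constructor
  · exact hcomp.const_mul c
  · intro X
    rw [deriv_scale hd c a]
    rw [deriv_scale (deriv_entire hd) (c * a) a]
    simp only [he]
    show c * a * a * (((a * X) ^ m + μ) * ψ (a * X)) = (X ^ m + lam) * (c * ψ (a * X))
    have hpow : a ^ m * a ^ 2 = 1 := by rw [← pow_add]; exact ha
    linear_combination (c * X ^ m * ψ (a * X)) * hpow + (c * ψ (a * X)) * hlam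
      + (c * ψ (a*X) * X ^ m) * (mul_pow a X m).symm * 0

end Stmt3Aux2

namespace Stmt3Aux3
open Stmt3Aux Stmt3Aux2

variable {m : ℕ}

lemma hm2 (m : ℕ) : ((m : ℂ) + 2) ≠ 0 := by
  have h : ((m:ℝ) + 2) ≠ 0 := by positivity
  have h2 : ((m : ℂ) + 2) = (((m:ℝ) + 2 : ℝ) : ℂ) := by push_cast; ring
  rw [h2]
  exact_mod_cast h

lemma hm2R (m : ℕ) : (0:ℝ) < (m : ℝ) + 2 := by positivity

lemma om_ne_zero (m : ℕ) : om m ≠ 0 := Complex.exp_ne_zero _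

lemma omPow_ne_zero (m : ℕ) (s : ℂ) : omPow m s ≠ 0 := Complex.exp_ne_zero _

lemma om_pow_m2 (m : ℕ) : om m ^ (m + 2) = 1 := by
  rw [om, ← Complex.exp_nat_mul]
  have : ((m + 2 : ℕ) : ℂ) * (2 * Real.pi * Complex.I / ((m : ℂ) + 2)) =
      2 * Real.pi * Complex.I := by
    push_cast
    rw [mul_div_assoc', mul_div_cancel_left₀ _ (hm2 m)]
  rw [this]
  simpa using Complex.exp_int_mul_two_pi_mul_I 1

lemma om_inv_pow_m2 (m : ℕ) : ((om m)⁻¹) ^ (m + 2) = 1 := by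
  rw [inv_pow, om_pow_m2, inv_one]

lemma omPow_half : omPow m (((m : ℂ) + 2) / 2) = -1 := by
  rw [omPow]
  have : 2 * (Real.pi : ℂ) * Complex.I / ((m : ℂ) + 2) * (((m : ℂ) + 2) / 2) =
      Real.pi * Complex.I := by
    field_simp [hm2 m]
  rw [this, Complex.exp_pi_mul_I]

lemma omPow_neg_half : omPow m (-(((m : ℂ) + 2) / 2)) = -1 := by
  rw [omPow]
  have : 2 * (Real.pi : ℂ) * Complex.I / ((m : ℂ) + 2) * (-(((m : ℂ) + 2) / 2)) =
      -(Real.pi * Complex.I) := by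
    field_simp [hm2 m]
  rw [this, Complex.exp_neg, Complex.exp_pi_mul_I]
  norm_num

/-- the angle 2π/(m+2) -/
def th (m : ℕ) : ℝ := 2 * Real.pi / (m + 2)

lemma th_pos : 0 < th m := by
  have := Real.pi_pos
  have := hm2R m
  unfold th
  positivity

lemma th_lt : th m < 3 * Real.pi / (m + 2) := by
  have hπ := Real.pi_pos
  have h2 := hm2R m
  unfold th
  apply (div_lt_div_iff_of_pos_right h2).mpr
  nlinarith

lemma abs_th_lt : |th m| < 3 * Real.pi / (m + 2) := by
  rw [abs_of_pos th_pos]; exact th_lt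

lemma abs_neg_th_lt : |(-th m)| < 3 * Real.pi / (m + 2) := by
  rw [abs_neg, abs_of_pos th_pos]; exact th_lt

lemma abs_zero_lt : |(0:ℝ)| < 3 * Real.pi / (m + 2) := by
  rw [abs_zero]
  have := Real.pi_pos
  have := hm2R m
  positivity

lemma exp_th : Complex.exp ((th m : ℂ) * Complex.I) = om m := by
  rw [om, th]
  congr 1
  push_cast
  ring

lemma exp_neg_th : Complex.exp (((-th m : ℝ) : ℂ) * Complex.I) = (om m)⁻¹ := by
  rw [← exp_th, ← Complex.exp_neg]
  congr 1
  push_cast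
  ring

lemma rayPt_zero (r : ℝ) : rayPt r 0 = (r : ℂ) := by
  simp [rayPt]

lemma rayPt_th (r : ℝ) : rayPt r (th m) = om m * (r : ℂ) := by
  rw [rayPt, exp_th, mul_comm]

lemma rayPt_neg_th (r : ℝ) : rayPt r (-th m) = (om m)⁻¹ * (r : ℂ) := by
  rw [rayPt, exp_neg_th, mul_comm]

lemma rayPow_th (r : ℝ) (s : ℂ) : rayPow r (th m) s = rayPow r 0 s * omPow m s := by
  rw [rayPow, rayPow, omPow, ← Complex.exp_add]
  congr 1
  rw [th]
  push_cast
  ring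

lemma rayPow_neg_th (r : ℝ) (s : ℂ) : rayPow r (-th m) s = rayPow r 0 s * omPow m (-s) := by
  rw [rayPow, rayPow, omPow, ← Complex.exp_add]
  congr 1
  rw [th]
  push_cast
  ring

end Stmt3Aux3

namespace Stmt3Aux4
open Stmt3Aux Stmt3Aux2 Stmt3Aux3

variable {m : ℕ}

/-- the decaying normalizer -/
def Gf (m : ℕ) (r : ℝ) : ℂ :=
  rayPow r 0 ((m:ℂ)/4) * Complex.exp (-(2/((m:ℂ)+2)) * rayPow r 0 (((m:ℂ)+2)/2))

lemma P_real (r : ℝ) :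
    rayPow r 0 (((m:ℂ)+2)/2) = ((Real.exp ((((m:ℝ)+2)/2) * Real.log r)) : ℂ) := by
  rw [rayPow, Complex.ofReal_exp]
  congr 1
  push_cast
  ring

lemma decay : Tendsto (fun r : ℝ =>
    Complex.exp (-(4/((m:ℂ)+2)) * rayPow r 0 (((m:ℂ)+2)/2))) atTop (nhds 0) := by
  have l1 : Tendsto (fun r : ℝ => (((m:ℝ)+2)/2) * Real.log r) atTop atTop :=
    Real.tendsto_log_atTop.const_mul_atTop (by positivity)
  have l2 : Tendsto (fun r : ℝ => Real.exp ((((m:ℝ)+2)/2) * Real.log r)) atTop atTop :=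
    Real.tendsto_exp_atTop.comp l1
  have l2' : Tendsto (fun r : ℝ => (4/((m:ℝ)+2)) * Real.exp ((((m:ℝ)+2)/2) * Real.log r))
      atTop atTop := l2.const_mul_atTop (by positivity)
  have l3 : Tendsto (fun r : ℝ => -((4/((m:ℝ)+2)) * Real.exp ((((m:ℝ)+2)/2) * Real.log r)))
      atTop atBot := tendsto_neg_atTop_atBot.comp l2'
  have l4 : Tendsto (fun r : ℝ =>
      Real.exp (-((4/((m:ℝ)+2)) * Real.exp ((((m:ℝ)+2)/2) * Real.log r)))) atTop (nhds 0) :=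
    Real.tendsto_exp_atBot.comp l3
  have l5 : Tendsto (fun r : ℝ =>
      ((Real.exp (-((4/((m:ℝ)+2)) * Real.exp ((((m:ℝ)+2)/2) * Real.log r)))) : ℂ))
      atTop (nhds ((0:ℝ):ℂ)) := (Complex.continuous_ofReal.tendsto _).comp l4
  rw [Complex.ofReal_zero] at l5
  refine Tendsto.congr (fun r => ?_) l5
  rw [P_real, Complex.ofReal_exp, Complex.ofReal_exp]
  congr 1
  push_cast
  ring

lemma T1 {Φ : ℂ → ℂ} (h : SibAsympSp m Φ) :
    Tendsto (fun r : ℝ => Φ ((r:ℝ):ℂ) * rayPow r 0 ((m:ℂ)/4) *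
      Complex.exp ((2/((m:ℂ)+2)) * rayPow r 0 (((m:ℂ)+2)/2))) atTop (nhds 1) := by
  have H := h 0 abs_zero_lt
  refine Tendsto.congr (fun r => ?_) H
  rw [rayPt_zero]

lemma T2 {Φ : ℂ → ℂ} (h : SibAsympSp m Φ) :
    Tendsto (fun r : ℝ => Φ ((r:ℝ):ℂ) * Gf m r) atTop (nhds 0) := by
  have H := (T1 h).mul (decay (m := m))
  rw [mul_zero] at H
  refine Tendsto.congr (fun r => ?_) H
  have he : Complex.exp ((2/((m:ℂ)+2)) * rayPow r 0 (((m:ℂ)+2)/2)) *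
      Complex.exp (-(4/((m:ℂ)+2)) * rayPow r 0 (((m:ℂ)+2)/2)) =
      Complex.exp (-(2/((m:ℂ)+2)) * rayPow r 0 (((m:ℂ)+2)/2)) := by
    rw [← Complex.exp_add]; congr 1; ring
  calc Φ ((r:ℝ):ℂ) * rayPow r 0 ((m:ℂ)/4) *
        Complex.exp ((2/((m:ℂ)+2)) * rayPow r 0 (((m:ℂ)+2)/2)) *
        Complex.exp (-(4/((m:ℂ)+2)) * rayPow r 0 (((m:ℂ)+2)/2))
      = Φ ((r:ℝ):ℂ) * rayPow r 0 ((m:ℂ)/4) *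
        (Complex.exp ((2/((m:ℂ)+2)) * rayPow r 0 (((m:ℂ)+2)/2)) *
         Complex.exp (-(4/((m:ℂ)+2)) * rayPow r 0 (((m:ℂ)+2)/2))) := by ring
    _ = Φ ((r:ℝ):ℂ) * Gf m r := by rw [he, Gf, mul_assoc]

lemma Trot {Φ : ℂ → ℂ} (h : SibAsympSp m Φ) :
    Tendsto (fun r : ℝ => omPow m ((m:ℂ)/4) * Φ (om m * ((r:ℝ):ℂ)) * Gf m r) atTop (nhds 1) := by
  have H := h (th m) abs_th_lt
  refine Tendsto.congr (fun r => ?_) H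
  rw [rayPt_th, rayPow_th, rayPow_th, omPow_half]
  have he : Complex.exp ((2/((m:ℂ)+2)) * (rayPow r 0 (((m:ℂ)+2)/2) * (-1))) =
      Complex.exp (-(2/((m:ℂ)+2)) * rayPow r 0 (((m:ℂ)+2)/2)) := by congr 1; ring
  rw [he, Gf]
  ring

lemma Trot' {Φ : ℂ → ℂ} (h : SibAsympSp m Φ) :
    Tendsto (fun r : ℝ => omPow m (-((m:ℂ)/4)) * Φ ((om m)⁻¹ * ((r:ℝ):ℂ)) * Gf m r)
      atTop (nhds 1) := by
  have H := h (-th m) abs_neg_th_lt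
  refine Tendsto.congr (fun r => ?_) H
  rw [rayPt_neg_th, rayPow_neg_th, rayPow_neg_th, omPow_neg_half]
  have he : Complex.exp ((2/((m:ℂ)+2)) * (rayPow r 0 (((m:ℂ)+2)/2) * (-1))) =
      Complex.exp (-(2/((m:ℂ)+2)) * rayPow r 0 (((m:ℂ)+2)/2)) := by congr 1; ring
  rw [he, Gf]
  ring

lemma exists_ne_zero {Φ : ℂ → ℂ} (h : SibAsympSp m Φ) : ∃ X : ℂ, Φ X ≠ 0 := by
  by_contra hc
  push_neg at hc
  have H := T1 h
  have H0 : Tendsto (fun r : ℝ => Φ ((r:ℝ):ℂ) * rayPow r 0 ((m:ℂ)/4) *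
      Complex.exp ((2/((m:ℂ)+2)) * rayPow r 0 (((m:ℂ)+2)/2))) atTop (nhds 0) := by
    refine Tendsto.congr (fun r => ?_) (tendsto_const_nhds (x := (0:ℂ)))
    rw [hc, zero_mul, zero_mul]
  exact one_ne_zero (tendsto_nhds_unique H H0)

end Stmt3Aux4

open Stmt3Aux Stmt3Aux2 Stmt3Aux3 Stmt3Aux4 Set

/-- with `Φ₁(X,λ) := ω^{-m/4} Φ₀(ω⁻¹X, ω²λ)` and
`Φ₋₁(X,λ) := ω^{m/4} Φ₀(ωX, ω⁻²λ)`, there is a unique `C : ℂ → ℂ` with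
`Φ₋₁ = C(λ)Φ₀ + Φ₁`; it is entire and satisfies
`C(λ) f₀(λ) = ω^{m/4} f₀(ω⁻²λ) - ω^{-m/4} f₀(ω²λ)` where `f₀(λ) = Φ₀(0,λ)`. -/
theorem stmt3 (m : ℕ) (hm : 3 ≤ m)
    (Φ₀ : ℂ × ℂ → ℂ)
    (hent : Differentiable ℂ Φ₀)
    (hode : ∀ lam : ℂ, ∀ X : ℂ,
      -(deriv (deriv fun Y => Φ₀ (Y, lam)) X) + (X ^ m + lam) * Φ₀ (X, lam) = 0)
    (hasym : ∀ lam : ℂ, SibAsympSp m fun X => Φ₀ (X, lam)) :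
    ∃ C : ℂ → ℂ,
      (∀ X lam : ℂ,
        omPow m ((m : ℂ) / 4) * Φ₀ (om m * X, om m ^ (-2 : ℤ) * lam) =
          C lam * Φ₀ (X, lam) +
            omPow m (-((m : ℂ) / 4)) * Φ₀ ((om m)⁻¹ * X, om m ^ 2 * lam)) ∧
      (∀ C' : ℂ → ℂ,
        (∀ X lam : ℂ,
          omPow m ((m : ℂ) / 4) * Φ₀ (om m * X, om m ^ (-2 : ℤ) * lam) =
            C' lam * Φ₀ (X, lam) +
              omPow m (-((m : ℂ) / 4)) * Φ₀ ((om m)⁻¹ * X, om m ^ 2 * lam)) → C' = C) ∧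
      Differentiable ℂ C ∧
      (∀ lam : ℂ,
        C lam * Φ₀ (0, lam) =
          omPow m ((m : ℂ) / 4) * Φ₀ (0, om m ^ (-2 : ℤ) * lam) -
            omPow m (-((m : ℂ) / 4)) * Φ₀ (0, om m ^ 2 * lam)) := by
  classical
  have hω := om_ne_zero m
  have hzp : (om m) ^ (2:ℕ) * om m ^ (-2:ℤ) = 1 := by
    rw [← zpow_natCast (om m) 2, ← zpow_add₀ hω]
    norm_num
  -- the three families of solutions, as opaque local constants
  obtain ⟨u0, hu0⟩ : ∃ f : ℂ → ℂ → ℂ, f = fun lam X => Φ₀ (X, lam) := ⟨_, rfl⟩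
  obtain ⟨u1, hu1⟩ : ∃ f : ℂ → ℂ → ℂ,
      f = fun lam X => omPow m (-((m:ℂ)/4)) * Φ₀ ((om m)⁻¹ * X, om m ^ 2 * lam) := ⟨_, rfl⟩
  obtain ⟨uu, huu⟩ : ∃ f : ℂ → ℂ → ℂ,
      f = fun lam X => omPow m ((m:ℂ)/4) * Φ₀ (om m * X, om m ^ (-2:ℤ) * lam) := ⟨_, rfl⟩
  have hdiff0 : ∀ lam : ℂ, Differentiable ℂ (fun X : ℂ => Φ₀ (X, lam)) := fun lam =>
    hent.comp (differentiable_fun_id.prodMk (differentiable_const lam))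
  have hode' : ∀ lam X : ℂ, deriv (deriv fun Y => Φ₀ (Y, lam)) X = (X^m + lam) * Φ₀ (X, lam) :=
    fun lam X => by linear_combination -(hode lam X)
  have hsol0 : ∀ lam : ℂ, IsSol m lam (u0 lam) := by
    intro lam
    simp only [hu0]
    exact ⟨hdiff0 lam, hode' lam⟩
  have hsol1 : ∀ lam : ℂ, IsSol m lam (u1 lam) := by
    intro lam
    have h := isSol_rotate (hsol0 (om m ^ 2 * lam)) (omPow m (-((m:ℂ)/4))) ((om m)⁻¹) lam
      (om_inv_pow_m2 m) (by field_simp)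
    simp only [hu0] at h
    simpa only [hu1] using h
  have hsolu : ∀ lam : ℂ, IsSol m lam (uu lam) := by
    intro lam
    have h := isSol_rotate (hsol0 (om m ^ (-2:ℤ) * lam)) (omPow m ((m:ℂ)/4)) (om m) lam
      (om_pow_m2 m) (by linear_combination lam * hzp)
    simp only [hu0] at h
    simpa only [huu] using h
  -- asymptotic limits
  have lT2 : ∀ lam : ℂ, Tendsto (fun r : ℝ => u0 lam ((r:ℝ):ℂ) * Gf m r) atTop (nhds 0) := by
    intro lam
    refine Tendsto.congr (fun r => ?_) (T2 (hasym lam))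
    simp only [hu0]
  have lT1 : ∀ lam : ℂ, Tendsto (fun r : ℝ => u1 lam ((r:ℝ):ℂ) * Gf m r) atTop (nhds 1) := by
    intro lam
    refine Tendsto.congr (fun r => ?_) (Trot' (m := m) (hasym (om m ^ 2 * lam)))
    simp only [hu1]
  have lTu : ∀ lam : ℂ, Tendsto (fun r : ℝ => uu lam ((r:ℝ):ℂ) * Gf m r) atTop (nhds 1) := by
    intro lam
    refine Tendsto.congr (fun r => ?_) (Trot (m := m) (hasym (om m ^ (-2:ℤ) * lam)))
    simp only [huu]
  have hnz : ∀ lam : ℂ, ∃ X : ℂ, u0 lam X ≠ 0 := by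
    intro lam
    obtain ⟨X, hX⟩ := exists_ne_zero (hasym lam)
    exact ⟨X, by simpa only [hu0] using hX⟩
  -- Wronskian is nonvanishing
  obtain ⟨W, hWdef⟩ : ∃ f : ℂ → ℂ,
      f = fun lam => u0 lam 0 * deriv (u1 lam) 0 - u1 lam 0 * deriv (u0 lam) 0 := ⟨_, rfl⟩
  have hW : ∀ lam : ℂ, W lam ≠ 0 := by
    intro lam hWeq
    simp only [hWdef] at hWeq
    have hdata : ¬ (u0 lam 0 = 0 ∧ deriv (u0 lam) 0 = 0) := by
      rintro ⟨ha, hb⟩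
      obtain ⟨X, hX⟩ := hnz lam
      exact hX (ode_unique (hsol0 lam) ha hb X)
    obtain ⟨t, hc, hd⟩ : ∃ t : ℂ, u1 lam 0 = t * u0 lam 0 ∧
        deriv (u1 lam) 0 = t * deriv (u0 lam) 0 := by
      by_cases ha : u0 lam 0 = 0
      · have hb : deriv (u0 lam) 0 ≠ 0 := fun hb => hdata ⟨ha, hb⟩
        refine ⟨deriv (u1 lam) 0 / deriv (u0 lam) 0, ?_, (div_mul_cancel₀ _ hb).symm⟩
        have h1 : u1 lam 0 * deriv (u0 lam) 0 = 0 := by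
          rw [ha] at hWeq
          linear_combination -hWeq
        have hc0 := (mul_eq_zero.1 h1).resolve_right hb
        rw [hc0, ha, mul_zero]
      · refine ⟨u1 lam 0 / u0 lam 0, (div_mul_cancel₀ _ ha).symm, ?_⟩
        rw [div_mul_eq_mul_div, eq_div_iff ha]
        linear_combination hWeq
    have heq := sol_eq (hsol1 lam) (hsol0 lam) t 0 hc hd
    have l2 : Tendsto (fun r : ℝ => u1 lam ((r:ℝ):ℂ) * Gf m r) atTop (nhds 0) := by
      have h2 := (lT2 lam).const_mul t
      rw [mul_zero] at h2
      refine Tendsto.congr (fun r => ?_) h2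
      rw [heq]
      ring
    exact one_ne_zero (tendsto_nhds_unique (lT1 lam) l2)
  -- the connection coefficients
  obtain ⟨C, hCdef⟩ : ∃ f : ℂ → ℂ,
      f = fun lam => (uu lam 0 * deriv (u1 lam) 0 - u1 lam 0 * deriv (uu lam) 0) / W lam :=
    ⟨_, rfl⟩
  obtain ⟨D, hDdef⟩ : ∃ f : ℂ → ℂ,
      f = fun lam => (u0 lam 0 * deriv (uu lam) 0 - uu lam 0 * deriv (u0 lam) 0) / W lam :=
    ⟨_, rfl⟩
  have hmain : ∀ lam X : ℂ, uu lam X = C lam * u0 lam X + D lam * u1 lam X := by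
    intro lam X
    have hWl := hW lam
    have hWl' : u0 lam 0 * deriv (u1 lam) 0 - u1 lam 0 * deriv (u0 lam) 0 ≠ 0 := by
      simpa only [hWdef] using hWl
    have hWl'' : deriv (u1 lam) 0 * u0 lam 0 - u1 lam 0 * deriv (u0 lam) 0 ≠ 0 := by
      rw [mul_comm]; exact hWl'
    have hψ := IsSol.comb (hsolu lam) (hsol0 lam) (hsol1 lam) (C lam) (D lam)
    have h0 : uu lam 0 - C lam * u0 lam 0 - D lam * u1 lam 0 = 0 := by
      simp only [hCdef, hDdef, hWdef]
      field_simp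
      ring
    have hd0 : deriv (fun X => uu lam X - C lam * u0 lam X - D lam * u1 lam X) 0 = 0 := by
      rw [deriv_comb (hsolu lam).1 (hsol0 lam).1 (hsol1 lam).1]
      simp only []
      simp only [hCdef, hDdef, hWdef]
      field_simp
      ring
    have hz := ode_unique hψ h0 hd0 X
    linear_combination hz
  have hD1 : ∀ lam : ℂ, D lam = 1 := by
    intro lam
    have l2 : Tendsto (fun r : ℝ => uu lam ((r:ℝ):ℂ) * Gf m r) atTop
        (nhds (C lam * 0 + D lam * 1)) := by
      have h2 := ((lT2 lam).const_mul (C lam)).add ((lT1 lam).const_mul (D lam))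
      refine Tendsto.congr (fun r => ?_) h2
      rw [hmain lam ((r:ℝ):ℂ)]
      ring
    have h1 := tendsto_nhds_unique (lTu lam) l2
    linear_combination -h1
  have hmain1 : ∀ X lam : ℂ,
      omPow m ((m : ℂ) / 4) * Φ₀ (om m * X, om m ^ (-2 : ℤ) * lam) =
        C lam * Φ₀ (X, lam) +
          omPow m (-((m : ℂ) / 4)) * Φ₀ ((om m)⁻¹ * X, om m ^ 2 * lam) := by
    intro X lam
    have h := hmain lam X
    rw [hD1 lam, one_mul] at h
    simpa only [hu0, hu1, huu] using h
  refine ⟨C, hmain1, ?_, ?_, ?_⟩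
  · -- uniqueness
    intro C' hC'
    funext lam
    obtain ⟨X₀, hX₀⟩ := hnz lam
    simp only [hu0] at hX₀
    have e1 := hC' X₀ lam
    have e2 := hmain1 X₀ lam
    have h3 : C' lam * Φ₀ (X₀, lam) = C lam * Φ₀ (X₀, lam) := by
      linear_combination e2 - e1
    exact mul_right_cancel₀ hX₀ h3
  · -- entirety
    intro lam₀
    obtain ⟨X₀, hX₀⟩ := hnz lam₀
    simp only [hu0] at hX₀
    have hcont : Continuous (fun lam : ℂ => Φ₀ (X₀, lam)) :=
      hent.continuous.comp (continuous_const.prodMk continuous_id)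
    have hopen : IsOpen {lam : ℂ | Φ₀ (X₀, lam) ≠ 0} :=
      isOpen_compl_singleton.preimage hcont
    have hQd : DifferentiableAt ℂ (fun lam : ℂ =>
        (omPow m ((m:ℂ)/4) * Φ₀ (om m * X₀, om m ^ (-2:ℤ) * lam) -
          omPow m (-((m:ℂ)/4)) * Φ₀ ((om m)⁻¹ * X₀, om m ^ 2 * lam)) /
          Φ₀ (X₀, lam)) lam₀ := by
      have d1 : Differentiable ℂ (fun lam : ℂ => Φ₀ (om m * X₀, om m ^ (-2:ℤ) * lam)) :=
        hent.comp ((differentiable_const _).prodMk (differentiable_fun_id.const_mul _))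
      have d2 : Differentiable ℂ (fun lam : ℂ => Φ₀ ((om m)⁻¹ * X₀, om m ^ 2 * lam)) :=
        hent.comp ((differentiable_const _).prodMk (differentiable_fun_id.const_mul _))
      have d3 : Differentiable ℂ (fun lam : ℂ => Φ₀ (X₀, lam)) :=
        hent.comp ((differentiable_const _).prodMk differentiable_fun_id)
      exact (((d1.const_mul _).sub (d2.const_mul _)).differentiableAt).div
        d3.differentiableAt hX₀
    have hev : C =ᶠ[nhds lam₀] (fun lam : ℂ =>
        (omPow m ((m:ℂ)/4) * Φ₀ (om m * X₀, om m ^ (-2:ℤ) * lam) -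
          omPow m (-((m:ℂ)/4)) * Φ₀ ((om m)⁻¹ * X₀, om m ^ 2 * lam)) /
          Φ₀ (X₀, lam)) := by
      filter_upwards [hopen.mem_nhds hX₀] with lam hlam
      rw [eq_div_iff hlam]
      linear_combination -(hmain1 X₀ lam)
    exact (Filter.EventuallyEq.differentiableAt_iff hev).2 hQd
  · -- relation at X = 0
    intro lam
    have h := hmain1 0 lam
    rw [mul_zero, mul_zero] at h
    linear_combination -h

end
end

section
/- Green's transform on a segment: conj(w(z₂)) w'(z₂) − conj(w(z₁)) w'(z₁) = e^{−iθ} ∫₀^r |w'(z(t))|² dt + e^{iθ} ∫₀^r f(z(t)) |w(z(t))|² dt. -/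
open Complex Filter Real

noncomputable section

set_option maxRecDepth 8000

/-- Green's transform on a segment. If `w'' = f·w` holds along the
segment from `z₁` to `z₂`, parametrized by `z(t) = z₁ + t e^{iθ}`, `t ∈ [0, r]`,
`r = |z₂ - z₁|`, then
`conj(w(z₂))w'(z₂) - conj(w(z₁))w'(z₁)
  = e^{-iθ} ∫₀^r |w'(z(t))|² dt + e^{iθ} ∫₀^r f(z(t)) |w(z(t))|² dt`. -/
theorem stmt12 (z₁ z₂ : ℂ) (hz : z₁ ≠ z₂)
    (r : ℝ) (hr : r = ‖z₂ - z₁‖)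
    (θ : ℝ) (hθ : Complex.exp (θ * Complex.I) = (z₂ - z₁) / (r : ℂ))
    (f w : ℂ → ℂ)
    (hf : ContinuousOn f
      ((fun t : ℝ => z₁ + (t : ℂ) * Complex.exp (θ * Complex.I)) '' Set.Icc 0 r))
    (U : Set ℂ) (hU : IsOpen U)
    (hsub : (fun t : ℝ => z₁ + (t : ℂ) * Complex.exp (θ * Complex.I)) '' Set.Icc 0 r ⊆ U)
    (hw : DifferentiableOn ℂ w U)
    (hode : ∀ z ∈ (fun t : ℝ => z₁ + (t : ℂ) * Complex.exp (θ * Complex.I)) '' Set.Icc 0 r,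
      deriv (deriv w) z = f z * w z) :
    (starRingEnd ℂ) (w z₂) * deriv w z₂ - (starRingEnd ℂ) (w z₁) * deriv w z₁ =
      Complex.exp (-(θ : ℂ) * Complex.I) *
        (∫ t in (0 : ℝ)..r,
          ((‖deriv w (z₁ + (t : ℂ) * Complex.exp (θ * Complex.I))‖ : ℂ)) ^ 2) +
      Complex.exp ((θ : ℂ) * Complex.I) *
        (∫ t in (0 : ℝ)..r,
          f (z₁ + (t : ℂ) * Complex.exp (θ * Complex.I)) *
            ((‖w (z₁ + (t : ℂ) * Complex.exp (θ * Complex.I))‖ : ℂ)) ^ 2) := by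
  set e : ℂ := Complex.exp (θ * Complex.I) with he
  set z : ℝ → ℂ := fun t => z₁ + (t : ℂ) * e with hzdef
  have hz21 : z₂ - z₁ ≠ 0 := sub_ne_zero.mpr (Ne.symm hz)
  have hrpos : 0 < r := by
    rw [hr]; exact (norm_pos_iff.mpr hz21)
  have hrne : (r : ℂ) ≠ 0 := by exact_mod_cast hrpos.ne'
  have hre : (r : ℂ) * e = z₂ - z₁ := by
    rw [hθ]; field_simp
  have hz0 : z 0 = z₁ := by simp [hzdef]
  have hzr : z r = z₂ := by simp [hzdef, hre]
  have hmem : ∀ t ∈ Set.Icc (0 : ℝ) r, z t ∈ U := fun t ht => hsub ⟨t, ht, rfl⟩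
  have hzc : Continuous z := by
    rw [hzdef]
    exact continuous_const.add (Complex.continuous_ofReal.mul continuous_const)
  have hwa : AnalyticOnNhd ℂ w U := hw.analyticOnNhd hU
  have hwd : AnalyticOnNhd ℂ (deriv w) U := hwa.deriv
  have hzt : ∀ t : ℝ, HasDerivAt z e t := by
    intro t
    rw [hzdef]
    simpa using ((Complex.ofRealCLM.hasDerivAt (x := t)).mul_const e).const_add z₁
  set F : ℝ → ℂ := fun t => (starRingEnd ℂ) (w (z t)) * deriv w (z t) with hF
  set G : ℝ → ℂ := fun t =>
    Complex.exp (-(θ : ℂ) * Complex.I) * ((‖deriv w (z t)‖ : ℂ)) ^ 2 +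
      e * (f (z t) * ((‖w (z t)‖ : ℂ)) ^ 2) with hG
  have hconj_e : (starRingEnd ℂ) e = Complex.exp (-(θ : ℂ) * Complex.I) := by
    rw [he, ← Complex.exp_conj, map_mul, Complex.conj_I, Complex.conj_ofReal]
    ring_nf
  have habs : ∀ a : ℂ, (starRingEnd ℂ) a * a = ((‖a‖ : ℂ)) ^ 2 := by
    intro a
    rw [mul_comm, Complex.mul_conj, Complex.normSq_eq_norm_sq]
    push_cast
    ring
  have hFderiv : ∀ t ∈ Set.Icc (0 : ℝ) r, HasDerivAt F (G t) t := by
    intro t ht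
    have hmt := hmem t ht
    have hw1 : HasDerivAt w (deriv w (z t)) (z t) :=
      ((hwa (z t) hmt).differentiableAt).hasDerivAt
    have hw2 : HasDerivAt (deriv w) (f (z t) * w (z t)) (z t) := by
      have := ((hwd (z t) hmt).differentiableAt).hasDerivAt
      rwa [hode (z t) ⟨t, ht, rfl⟩] at this
    have hcomp1 : HasDerivAt (fun s => w (z s)) (e • deriv w (z t)) t :=
      hw1.scomp t (hzt t)
    have hcomp2 : HasDerivAt (fun s => deriv w (z s)) (e • (f (z t) * w (z t))) t :=
      hw2.scomp t (hzt t)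
    have hstar : HasDerivAt (fun s => (starRingEnd ℂ) (w (z s)))
        (star (e • deriv w (z t))) t := by
      exact hcomp1.star
    have heq : G t = star (e • deriv w (z t)) * deriv w (z t) +
        (starRingEnd ℂ) (w (z t)) * (e • (f (z t) * w (z t))) := by
      rw [hG]
      simp only [smul_eq_mul, star_mul']
      rw [← hconj_e, ← habs (deriv w (z t)), ← habs (w (z t))]
      simp only [starRingEnd_apply]
      ring
    rw [hF, heq]
    exact hstar.mul hcomp2
  have hczw : ContinuousOn (fun t => w (z t)) (Set.Icc 0 r) :=
    (hwa.continuousOn).comp hzc.continuousOn hmem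
  have hczw' : ContinuousOn (fun t => deriv w (z t)) (Set.Icc 0 r) :=
    (hwd.continuousOn).comp hzc.continuousOn hmem
  have hczf : ContinuousOn (fun t => f (z t)) (Set.Icc 0 r) :=
    hf.comp hzc.continuousOn (fun t ht => ⟨t, ht, rfl⟩)
  have hint1 : IntervalIntegrable (fun t => ((‖deriv w (z t)‖ : ℂ)) ^ 2)
      MeasureTheory.volume 0 r := by
    apply ContinuousOn.intervalIntegrable
    rw [Set.uIcc_of_le hrpos.le]
    exact (Complex.continuous_ofReal.comp_continuousOn hczw'.norm).pow 2
  have hint2 : IntervalIntegrable (fun t => f (z t) * ((‖w (z t)‖ : ℂ)) ^ 2)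
      MeasureTheory.volume 0 r := by
    apply ContinuousOn.intervalIntegrable
    rw [Set.uIcc_of_le hrpos.le]
    exact hczf.mul ((Complex.continuous_ofReal.comp_continuousOn hczw.norm).pow 2)
  have hintG : IntervalIntegrable G MeasureTheory.volume 0 r := by
    rw [hG]
    exact (hint1.const_mul _).add (hint2.const_mul _)
  have hFTC : ∫ t in (0 : ℝ)..r, G t = F r - F 0 := by
    apply intervalIntegral.integral_eq_sub_of_hasDerivAt
    · intro t ht
      rw [Set.uIcc_of_le hrpos.le] at ht
      exact hFderiv t ht
    · exact hintG
  have hsplit : ∫ t in (0 : ℝ)..r, G t =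
      Complex.exp (-(θ : ℂ) * Complex.I) *
        (∫ t in (0 : ℝ)..r, ((‖deriv w (z t)‖ : ℂ)) ^ 2) +
      e * (∫ t in (0 : ℝ)..r, f (z t) * ((‖w (z t)‖ : ℂ)) ^ 2) := by
    simp only [hG]
    rw [intervalIntegral.integral_add (hint1.const_mul _) (hint2.const_mul _),
      intervalIntegral.integral_const_mul, intervalIntegral.integral_const_mul]
  have hfin := (hFTC.symm.trans hsplit)
  rw [hF] at hfin
  simp only [hz0, hzr] at hfin
  exact hfin

end
end

section
/- The function t ↦ w(t) w'(t) is strictly increasing on [0, ∞) and satisfies w(t) w'(t) < 0 for every t ≥ 0; consequently w(t) ≠ 0 and w'(t) ≠ 0 for every t ≥ 0. -/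
open Set Filter

noncomputable section

/-- Gronwall-type uniqueness: if `w` and `w'` both vanish at some `t₀ ≥ 0`, then `w`
vanishes identically on `[0,∞)`. -/
lemma aux_vanish (m : ℕ) (lam : ℝ) (hlam : 0 ≤ lam)
    (w w' w'' : ℝ → ℝ)
    (hw : ∀ t ∈ Set.Ici (0 : ℝ), HasDerivWithinAt w (w' t) (Set.Ici 0) t)
    (hw' : ∀ t ∈ Set.Ici (0 : ℝ), HasDerivWithinAt w' (w'' t) (Set.Ici 0) t)
    (hode : ∀ t ∈ Set.Ici (0 : ℝ), w'' t = (t ^ m + lam) * w t)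
    (t₀ : ℝ) (ht₀ : 0 ≤ t₀) (h0 : w t₀ = 0) (h0' : w' t₀ = 0) :
    ∀ s ∈ Set.Ici (0 : ℝ), w s = 0 := by
  set φ : ℝ → ℝ := fun t => w t * w t + w' t * w' t with hφ
  have hφcont : ContinuousOn φ (Set.Ici 0) := by
    have hwc : ContinuousOn w (Set.Ici 0) := fun t ht => (hw t ht).continuousWithinAt
    have hwc' : ContinuousOn w' (Set.Ici 0) := fun t ht => (hw' t ht).continuousWithinAt
    exact (hwc.mul hwc).add (hwc'.mul hwc')
  have hφnonneg : ∀ t, 0 ≤ φ t := fun t => by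
    simp only [hφ]; nlinarith [sq_nonneg (w t), sq_nonneg (w' t)]
  have hφt₀ : φ t₀ = 0 := by simp [hφ, h0, h0']
  -- derivative of φ at interior points
  have hφderiv : ∀ x : ℝ, 0 < x →
      HasDerivAt φ (2 * (1 + x ^ m + lam) * (w x * w' x)) x := by
    intro x hx
    have hx' : x ∈ Set.Ici (0 : ℝ) := le_of_lt hx
    have h1 : HasDerivAt w (w' x) x := (hw x hx').hasDerivAt (Ici_mem_nhds hx)
    have h2 : HasDerivAt w' (w'' x) x := (hw' x hx').hasDerivAt (Ici_mem_nhds hx)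
    have h3 : HasDerivAt φ (w' x * w x + w x * w' x + (w'' x * w' x + w' x * w'' x)) x :=
      (h1.mul h1).add (h2.mul h2)
    have := hode x hx'
    convert h3 using 1
    rw [this]; ring
  intro s hs
  rcases le_or_gt s t₀ with hst | hst
  · -- backward: s ≤ t₀
    set C : ℝ := 1 + t₀ ^ m + lam with hC
    set ψ : ℝ → ℝ := fun t => Real.exp (C * t) * φ t with hψ
    have hmono : MonotoneOn ψ (Set.Icc 0 t₀) := by
      have hDer : ∀ x ∈ interior (Set.Icc (0:ℝ) t₀),
          HasDerivAt ψ (C * Real.exp (C * x) * φ x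
            + Real.exp (C * x) * (2 * (1 + x ^ m + lam) * (w x * w' x))) x := by
        intro x hx
        rw [interior_Icc] at hx
        have hxpos : 0 < x := hx.1
        have hexp : HasDerivAt (fun t => Real.exp (C * t)) (C * Real.exp (C * x)) x := by
          have h : HasDerivAt (fun t => Real.exp (C * t)) (Real.exp (C * x) * (C * 1)) x :=
            ((hasDerivAt_id x).const_mul C).exp
          simpa [mul_comm] using h
        exact hexp.mul (hφderiv x hxpos)
      apply monotoneOn_of_deriv_nonneg (convex_Icc 0 t₀)
      · exact (Real.continuous_exp.comp (continuous_const.mul continuous_id)).continuousOn.mul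
          (hφcont.mono (Icc_subset_Ici_self))
      · intro x hx
        exact (hDer x hx).differentiableAt.differentiableWithinAt
      · intro x hx
        rw [(hDer x hx).deriv]
        rw [interior_Icc] at hx
        have hxm : x ^ m ≤ t₀ ^ m := pow_le_pow_left₀ hx.1.le hx.2.le m
        have hE : (0:ℝ) < Real.exp (C * x) := Real.exp_pos _
        have hA : (0:ℝ) ≤ 1 + x ^ m + lam := by
          have := pow_nonneg hx.1.le m; linarith
        have key : 0 ≤ C * φ x + 2 * (1 + x ^ m + lam) * (w x * w' x) := by
          simp only [hφ, hC]
          nlinarith [mul_nonneg (sub_nonneg.2 hxm)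
              (add_nonneg (mul_self_nonneg (w x)) (mul_self_nonneg (w' x))),
            mul_nonneg hA (sq_nonneg (w x + w' x))]
        nlinarith [mul_nonneg hE.le key]
    have h1 : ψ s ≤ ψ t₀ := hmono ⟨hs, hst⟩ (right_mem_Icc.2 ht₀) hst
    have h2 : ψ t₀ = 0 := by simp [hψ, hφt₀]
    have h3 : 0 ≤ ψ s := mul_nonneg (Real.exp_pos _).le (hφnonneg s)
    have hφs : φ s = 0 := by
      have : ψ s = 0 := le_antisymm (h2 ▸ h1) h3
      have hE : (0:ℝ) < Real.exp (C * s) := Real.exp_pos _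
      have := mul_eq_zero.1 this
      rcases this with h | h
      · exact absurd h hE.ne'
      · exact h
    have hws : w s * w s = 0 := le_antisymm
      (by simp only [hφ] at hφs; nlinarith [mul_self_nonneg (w' s)]) (mul_self_nonneg _)
    exact mul_self_eq_zero.1 hws
  · -- forward: t₀ < s
    set C : ℝ := 1 + s ^ m + lam with hC
    set χ : ℝ → ℝ := fun t => Real.exp (-(C * t)) * φ t with hχ
    have hanti : AntitoneOn χ (Set.Icc t₀ s) := by
      have hDer : ∀ x ∈ interior (Set.Icc t₀ s),
          HasDerivAt χ ((-C) * Real.exp (-(C * x)) * φ x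
            + Real.exp (-(C * x)) * (2 * (1 + x ^ m + lam) * (w x * w' x))) x := by
        intro x hx
        rw [interior_Icc] at hx
        have hxpos : 0 < x := lt_of_le_of_lt ht₀ hx.1
        have hexp : HasDerivAt (fun t => Real.exp (-(C * t))) ((-C) * Real.exp (-(C * x))) x := by
          have h : HasDerivAt (fun t => Real.exp (-(C * t))) (Real.exp (-(C * x)) * (-(C * 1))) x :=
            (((hasDerivAt_id x).const_mul C).neg).exp
          simpa [mul_comm] using h
        exact hexp.mul (hφderiv x hxpos)
      apply antitoneOn_of_deriv_nonpos (convex_Icc t₀ s)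
      · apply ContinuousOn.mul
        · exact (Real.continuous_exp.comp (continuous_const.mul continuous_id).neg).continuousOn
        · exact hφcont.mono (fun x hx => le_trans ht₀ hx.1)
      · intro x hx
        exact (hDer x hx).differentiableAt.differentiableWithinAt
      · intro x hx
        rw [(hDer x hx).deriv]
        rw [interior_Icc] at hx
        have hxpos : 0 < x := lt_of_le_of_lt ht₀ hx.1
        have hxm : x ^ m ≤ s ^ m := pow_le_pow_left₀ hxpos.le hx.2.le m
        have hE : (0:ℝ) < Real.exp (-(C * x)) := Real.exp_pos _
        have hA : (0:ℝ) ≤ 1 + x ^ m + lam := by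
          have := pow_nonneg hxpos.le m; linarith
        have key : (-C) * φ x + 2 * (1 + x ^ m + lam) * (w x * w' x) ≤ 0 := by
          simp only [hφ, hC]
          nlinarith [mul_nonneg (sub_nonneg.2 hxm)
              (add_nonneg (mul_self_nonneg (w x)) (mul_self_nonneg (w' x))),
            mul_nonneg hA (sq_nonneg (w x - w' x))]
        nlinarith [mul_nonpos_of_nonneg_of_nonpos hE.le key]
    have h1 : χ s ≤ χ t₀ := hanti (left_mem_Icc.2 hst.le) ⟨hst.le, le_refl s⟩ hst.le
    have h2 : χ t₀ = 0 := by simp [hχ, hφt₀]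
    have h3 : 0 ≤ χ s := mul_nonneg (Real.exp_pos _).le (hφnonneg s)
    have hφs : φ s = 0 := by
      have hz : χ s = 0 := le_antisymm (h2 ▸ h1) h3
      have hE : (0:ℝ) < Real.exp (-(C * s)) := Real.exp_pos _
      rcases mul_eq_zero.1 hz with h | h
      · exact absurd h hE.ne'
      · exact h
    have hws : w s * w s = 0 := le_antisymm
      (by simp only [hφ] at hφs; nlinarith [mul_self_nonneg (w' s)]) (mul_self_nonneg _)
    exact mul_self_eq_zero.1 hws

/-- if `w : [0,∞) → ℝ` is twice continuously differentiable, not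
identically zero, satisfies `w'' = (t^m + λ)w` with `λ ≥ 0`, and `w w' → 0` at `+∞`,
then `t ↦ w(t)w'(t)` is strictly increasing on `[0,∞)`, `w(t)w'(t) < 0` for all
`t ≥ 0`, and consequently `w(t) ≠ 0` and `w'(t) ≠ 0` for all `t ≥ 0`. -/
theorem stmt13 (m : ℕ) (hm : 1 ≤ m) (lam : ℝ) (hlam : 0 ≤ lam)
    (w w' w'' : ℝ → ℝ)
    (hw : ∀ t ∈ Set.Ici (0 : ℝ), HasDerivWithinAt w (w' t) (Set.Ici 0) t)
    (hw' : ∀ t ∈ Set.Ici (0 : ℝ), HasDerivWithinAt w' (w'' t) (Set.Ici 0) t)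
    (hw'' : ContinuousOn w'' (Set.Ici 0))
    (hne : ∃ t ∈ Set.Ici (0 : ℝ), w t ≠ 0)
    (hode : ∀ t ∈ Set.Ici (0 : ℝ), w'' t = (t ^ m + lam) * w t)
    (hlim : Filter.Tendsto (fun t => w t * w' t) Filter.atTop (nhds 0)) :
    StrictMonoOn (fun t => w t * w' t) (Set.Ici 0) ∧
      ∀ t ∈ Set.Ici (0 : ℝ), w t * w' t < 0 ∧ w t ≠ 0 ∧ w' t ≠ 0 := by
  -- not both w and w' vanish at any point
  have hnb : ∀ t ∈ Set.Ici (0:ℝ), ¬(w t = 0 ∧ w' t = 0) := by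
    rintro t ht ⟨h1, h2⟩
    obtain ⟨s, hs, hws⟩ := hne
    exact hws (aux_vanish m lam hlam w w' w'' hw hw' hode t ht h1 h2 s hs)
  -- strict monotonicity
  have hgmono : StrictMonoOn (fun t => w t * w' t) (Set.Ici 0) := by
    apply strictMonoOn_of_deriv_pos (convex_Ici 0)
    · exact fun t ht => ((hw t ht).continuousWithinAt.mul (hw' t ht).continuousWithinAt)
    · intro x hx
      rw [interior_Ici] at hx
      have hx' : x ∈ Set.Ici (0:ℝ) := Set.mem_Ici.mpr (le_of_lt (Set.mem_Ioi.mp hx))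
      have h1 : HasDerivAt w (w' x) x := (hw x hx').hasDerivAt (Ici_mem_nhds hx)
      have h2 : HasDerivAt w' (w'' x) x := (hw' x hx').hasDerivAt (Ici_mem_nhds hx)
      have h3 : HasDerivAt (fun t => w t * w' t) (w' x * w' x + w x * w'' x) x := h1.mul h2
      rw [h3.deriv, hode x hx']
      have hpow : 0 < x ^ m + lam := add_pos_of_pos_of_nonneg (pow_pos hx m) hlam
      rcases eq_or_ne (w x) 0 with h | h
      · have h' : w' x ≠ 0 := fun h' => hnb x hx' ⟨h, h'⟩
        have hp : 0 < w' x * w' x := mul_self_pos.2 h'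
        nlinarith [mul_nonneg hpow.le (mul_self_nonneg (w x))]
      · have hp : 0 < (x ^ m + lam) * (w x * w x) := mul_pos hpow (mul_self_pos.2 h)
        nlinarith [mul_self_nonneg (w' x)]
  refine ⟨hgmono, fun t ht => ?_⟩
  -- g t < 0
  have hneg : w t * w' t < 0 := by
    by_contra h
    push_neg at h
    have h1 : 0 < w (t+1) * w' (t+1) := lt_of_le_of_lt h (hgmono ht (by simp at ht ⊢; linarith) (by linarith))
    have h2 : ∀ᶠ s in atTop, w s * w' s < w (t+1) * w' (t+1) :=
      hlim.eventually (eventually_lt_nhds h1)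
    have h3 : ∀ᶠ s in atTop, (t+1 : ℝ) ≤ s := eventually_ge_atTop (t+1)
    obtain ⟨s, hs1, hs2⟩ := (h2.and h3).exists
    have ht1 : (t+1 : ℝ) ∈ Set.Ici (0:ℝ) := by simp at ht ⊢; linarith
    have : w (t+1) * w' (t+1) ≤ w s * w' s := by
      rcases eq_or_lt_of_le hs2 with h | h
      · rw [h]
      · exact le_of_lt (hgmono ht1 (le_trans ht1 hs2) h)
    linarith
  refine ⟨hneg, ?_, ?_⟩
  · intro h; rw [h] at hneg; simp at hneg
  · intro h; rw [h] at hneg; simp at hneg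
end
end

section
/- The number λ is real and negative: λ ∈ ℝ and λ < 0. -/
open Set Filter MeasureTheory

noncomputable section

/-- if `w : [0,∞) → ℂ` is a twice continuously differentiable, not
identically zero solution of `w'' = (t^m + λ)w` with `w(0) = 0`, such that
`∫₀^∞ |w|² < ∞`, `∫₀^∞ |w'|² < ∞`, `∫₀^∞ t^m |w|² < ∞` and
`conj(w)w' → 0` at `+∞`, then `λ` is real and negative. -/
theorem stmt14 (m : ℕ) (hm : 1 ≤ m) (lam : ℂ)
    (w w' w'' : ℝ → ℂ)
    (hw : ∀ t ∈ Set.Ici (0 : ℝ), HasDerivWithinAt w (w' t) (Set.Ici 0) t)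
    (hw' : ∀ t ∈ Set.Ici (0 : ℝ), HasDerivWithinAt w' (w'' t) (Set.Ici 0) t)
    (hw'' : ContinuousOn w'' (Set.Ici 0))
    (hne : ∃ t ∈ Set.Ici (0 : ℝ), w t ≠ 0)
    (h0 : w 0 = 0)
    (hode : ∀ t ∈ Set.Ici (0 : ℝ), w'' t = ((t : ℂ) ^ m + lam) * w t)
    (hi1 : MeasureTheory.IntegrableOn (fun t => ‖w t‖ ^ 2) (Set.Ici 0))
    (hi2 : MeasureTheory.IntegrableOn (fun t => ‖w' t‖ ^ 2) (Set.Ici 0))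
    (hi3 : MeasureTheory.IntegrableOn (fun t => t ^ m * ‖w t‖ ^ 2) (Set.Ici 0))
    (hlim : Filter.Tendsto (fun t => (starRingEnd ℂ) (w t) * w' t)
      Filter.atTop (nhds 0)) :
    lam.im = 0 ∧ lam.re < 0 := by
  have hwc : ContinuousOn w (Ici 0) := fun t ht => (hw t ht).continuousWithinAt
  have hw'c : ContinuousOn w' (Ici 0) := fun t ht => (hw' t ht).continuousWithinAt
  have hconj : ∀ z : ℂ, (starRingEnd ℂ) z * z = ((‖z‖ ^ 2 : ℝ) : ℂ) := fun z => by
    rw [Complex.sq_norm, Complex.normSq_eq_conj_mul_self]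
  set g : ℝ → ℂ := fun t => ((‖w' t‖ ^ 2 : ℝ) : ℂ) + ((t ^ m * ‖w t‖ ^ 2 : ℝ) : ℂ)
      + lam * ((‖w t‖ ^ 2 : ℝ) : ℂ) with hg
  -- derivative of F := conj w * w'
  have hFd : ∀ t ∈ Ici (0 : ℝ), HasDerivWithinAt (fun t => (starRingEnd ℂ) (w t) * w' t)
      (g t) (Ici 0) t := by
    intro t ht
    have hd := ((hw t ht).star.mul (hw' t ht))
    have hgt : g t = (starRingEnd ℂ) (w' t) * w' t + (starRingEnd ℂ) (w t) * w'' t := by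
      rw [hode t ht, hg]
      simp only
      rw [Complex.ofReal_mul, ← hconj (w' t), ← hconj (w t), Complex.ofReal_pow]
      ring
    rw [hgt]
    exact hd
  have hFcont : ContinuousOn (fun t => (starRingEnd ℂ) (w t) * w' t) (Ici 0) :=
    fun t ht => (hFd t ht).continuousWithinAt
  have hgcont : ContinuousOn g (Ici 0) := by
    refine ContinuousOn.add (ContinuousOn.add ?_ ?_) ?_
    · exact Complex.continuous_ofReal.comp_continuousOn ((hw'c.norm).pow 2)
    · exact Complex.continuous_ofReal.comp_continuousOn
        (((continuous_pow m).continuousOn).mul ((hwc.norm).pow 2))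
    · exact continuousOn_const.mul
        (Complex.continuous_ofReal.comp_continuousOn ((hwc.norm).pow 2))
  -- FTC on [0, T]
  have key : ∀ T : ℝ, 0 ≤ T → ∫ t in (0:ℝ)..T, g t = (starRingEnd ℂ) (w T) * w' T := by
    intro T hT
    have hIcc : Icc (0:ℝ) T ⊆ Ici 0 := Icc_subset_Ici_self
    have huIcc : uIcc (0:ℝ) T ⊆ Ici 0 := by rw [uIcc_of_le hT]; exact hIcc
    have := intervalIntegral.integral_eq_sub_of_hasDeriv_right_of_le hT
      (hFcont.mono hIcc)
      (fun x hx => (hFd x (le_of_lt hx.1)).mono (fun y (hy : x < y) => (hx.1.trans hy).le))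
      ((hgcont.mono huIcc).intervalIntegrable)
    rw [this, h0]
    simp
  -- integrability of g on Ioi 0
  have hg2 : IntegrableOn (fun t => ((‖w' t‖ ^ 2 : ℝ) : ℂ)) (Ioi 0) :=
    (hi2.mono_set Ioi_subset_Ici_self).ofReal
  have hg3 : IntegrableOn (fun t => ((t ^ m * ‖w t‖ ^ 2 : ℝ) : ℂ)) (Ioi 0) :=
    (hi3.mono_set Ioi_subset_Ici_self).ofReal
  have hg1 : IntegrableOn (fun t => lam * ((‖w t‖ ^ 2 : ℝ) : ℂ)) (Ioi 0) :=
    ((hi1.mono_set Ioi_subset_Ici_self).ofReal).const_mul lam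
  have hg23 : IntegrableOn (fun t => ((‖w' t‖ ^ 2 : ℝ) : ℂ) + ((t ^ m * ‖w t‖ ^ 2 : ℝ) : ℂ))
      (Ioi 0) volume := hg2.add hg3
  have hgint : IntegrableOn g (Ioi 0) := hg23.add hg1
  have h1 : Tendsto (fun T => ∫ t in (0:ℝ)..T, g t) atTop (nhds (∫ t in Ioi (0:ℝ), g t)) :=
    intervalIntegral_tendsto_integral_Ioi 0 hgint tendsto_id
  have h2 : Tendsto (fun T => ∫ t in (0:ℝ)..T, g t) atTop (nhds 0) := by
    refine Tendsto.congr' ?_ hlim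
    filter_upwards [eventually_ge_atTop (0:ℝ)] with T hT using (key T hT).symm
  have hzero : ∫ t in Ioi (0:ℝ), g t = 0 := tendsto_nhds_unique h1 h2
  set A := ∫ t in Ioi (0:ℝ), ‖w' t‖ ^ 2 with hA
  set B := ∫ t in Ioi (0:ℝ), t ^ m * ‖w t‖ ^ 2 with hB
  set C := ∫ t in Ioi (0:ℝ), ‖w t‖ ^ 2 with hC
  have hsplit : ∫ t in Ioi (0:ℝ), g t = (A : ℂ) + (B : ℂ) + lam * (C : ℂ) := by
    rw [hg]
    have e1 : ∫ t in Ioi (0:ℝ), ((‖w' t‖ ^ 2 : ℝ) : ℂ) = ((A : ℝ) : ℂ) := integral_ofReal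
    have e2 : ∫ t in Ioi (0:ℝ), ((t ^ m * ‖w t‖ ^ 2 : ℝ) : ℂ) = ((B : ℝ) : ℂ) := integral_ofReal
    have e3 : ∫ t in Ioi (0:ℝ), ((‖w t‖ ^ 2 : ℝ) : ℂ) = ((C : ℝ) : ℂ) := integral_ofReal
    rw [integral_add hg23 hg1, integral_add hg2 hg3, integral_const_mul, e1, e2, e3]
  have heq : (A : ℂ) + (B : ℂ) + lam * (C : ℂ) = 0 := by rw [← hsplit]; exact hzero
  -- positivity
  obtain ⟨t₀, ht₀, hwne⟩ := hne
  have ht₀pos : 0 < t₀ := ht₀.lt_of_ne fun h => hwne (h ▸ h0)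
  have hca : ContinuousAt w t₀ := hwc.continuousAt (Ici_mem_nhds ht₀pos)
  have hev : ∀ᶠ y in nhds t₀, w y ≠ 0 := hca.eventually_ne hwne
  obtain ⟨ε, hε, hball⟩ := Metric.eventually_nhds_iff_ball.mp hev
  set r := min ε t₀ with hr
  have hrpos : 0 < r := lt_min hε ht₀pos
  have hball2 : Metric.ball t₀ r ⊆ Ioi 0 := by
    intro y hy
    have hd : |y - t₀| < r := by
      have := Metric.mem_ball.mp hy; rwa [Real.dist_eq] at this
    have h1 := (abs_sub_lt_iff.mp hd).2
    have h2 : r ≤ t₀ := min_le_right ε t₀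
    have : (0:ℝ) < y := by linarith
    exact this
  have hballne : ∀ y ∈ Metric.ball t₀ r, w y ≠ 0 := fun y hy =>
    hball y (Metric.ball_subset_ball (min_le_left ε t₀) hy)
  have hApos : 0 ≤ A :=
    setIntegral_nonneg measurableSet_Ioi fun t _ => by positivity
  have hBpos : 0 < B := by
    rw [setIntegral_pos_iff_support_of_nonneg_ae
      ((ae_restrict_iff' measurableSet_Ioi).mpr (ae_of_all _ fun t ht => by
        have : (0:ℝ) < t := ht
        positivity))
      (hi3.mono_set Ioi_subset_Ici_self)]
    refine lt_of_lt_of_le (Metric.measure_ball_pos volume t₀ hrpos) (measure_mono ?_)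
    intro y hy
    have hy0 : (0:ℝ) < y := hball2 hy
    have hwy : ‖w y‖ > 0 := norm_pos_iff.mpr (hballne y hy)
    exact ⟨ne_of_gt (by positivity), hball2 hy⟩
  have hCpos : 0 < C := by
    rw [setIntegral_pos_iff_support_of_nonneg_ae
      ((ae_restrict_iff' measurableSet_Ioi).mpr (ae_of_all _ fun t _ => by positivity))
      (hi1.mono_set Ioi_subset_Ici_self)]
    refine lt_of_lt_of_le (Metric.measure_ball_pos volume t₀ hrpos) (measure_mono ?_)
    intro y hy
    have hwy : ‖w y‖ > 0 := norm_pos_iff.mpr (hballne y hy)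
    exact ⟨ne_of_gt (by positivity), hball2 hy⟩
  -- conclusion
  have him : lam.im * C = 0 := by
    have := congrArg Complex.im heq
    simpa using this
  have hre : A + B + lam.re * C = 0 := by
    have := congrArg Complex.re heq
    simpa using this
  constructor
  · rcases mul_eq_zero.mp him with h | h
    · exact h
    · exact absurd h (ne_of_gt hCpos)
  · by_contra hcon
    push_neg at hcon
    nlinarith [mul_nonneg hcon hCpos.le]
end
end
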